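/- Let R be a perfect valuation ring of characteristic p, complete with respect to a nondiscrete rank-1 valuation v, with pseudouniformizer ϖ of valuation 1. In A = W(R), the ideal p := ⋃_{k≥0} [ϖ^{1/p^k}]·A (the union over k of the principal ideals generated by the Teichmüller lifts of the p^k-th roots of ϖ) is a prime ideal. -/

import Mathlib

open WittVector Finset

namespace Stmt6Aux

variable {p : ℕ} [hp : Fact p.Prime] {R : Type*} [CommRing R]

local notation "𝕎" => WittVector p R
local notation "V" => verschiebung (p := p) (R := R)

theorem iterate_verschiebung_coeff_lt (x : 𝕎) {n m : ℕ} (h : n < m) :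
    (verschiebung^[m] x).coeff n = 0 := by
  induction m generalizing n with
  | zero => omega
  | succ k ih =>
    rw [Function.iterate_succ_apply']
    cases n with
    | zero => exact verschiebung_coeff_zero _
    | succ n => rw [verschiebung_coeff_succ]; exact ih (by omega)

theorem vt_coeff (a : R) (m n : ℕ) :
    (verschiebung^[m] (teichmuller p a)).coeff n = if n = m then a else 0 := by
  rcases lt_trichotomy n m with h | h | h
  · rw [if_neg h.ne, iterate_verschiebung_coeff_lt _ h]
  · subst h
    rw [if_pos rfl]
    have := iterate_verschiebung_coeff (p := p) (R := R) (teichmuller p a) n 0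
    rw [zero_add] at this
    rw [this, teichmuller_coeff_zero]
  · rw [if_neg h.ne']
    obtain ⟨k, rfl⟩ : ∃ k, n = (k + 1) + m := ⟨n - m - 1, by omega⟩
    rw [iterate_verschiebung_coeff, teichmuller_coeff_pos p a (k+1) (Nat.succ_pos k)]

theorem tsum_coeff (t : ℕ → R) (N n : ℕ) :
    ((Finset.range N).sum fun a => verschiebung^[a] (teichmuller p (t a))).coeff n
      = if n < N then t n else 0 := by
  induction N generalizing n with
  | zero => simp
  | succ N ih =>
    rw [Finset.sum_range_succ, coeff_add_of_disjoint]
    · rw [ih, vt_coeff]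
      rcases lt_trichotomy n N with h | h | h
      · rw [if_pos h, if_neg h.ne, if_pos (by omega), add_zero]
      · subst h; rw [if_neg (lt_irrefl n), if_pos rfl, if_pos (by omega), zero_add]
      · rw [if_neg (by omega), if_neg (by omega), if_neg (by omega), add_zero]
    · intro m
      rcases lt_or_ge m N with h | h
      · right; rw [vt_coeff, if_neg h.ne]
      · left; rw [ih, if_neg (by omega)]

theorem truncate_eq_sum (f : 𝕎) (N : ℕ) :
    WittVector.truncate N f =
      WittVector.truncate N
        ((Finset.range N).sum fun a => verschiebung^[a] (teichmuller p (f.coeff a))) := by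
  apply TruncatedWittVector.ext
  intro i
  rw [coeff_truncate, coeff_truncate, tsum_coeff, if_pos i.2]


theorem iterate_verschiebung_add (x y : 𝕎) (n : ℕ) :
    verschiebung^[n] (x + y) = verschiebung^[n] x + verschiebung^[n] y := by
  induction n generalizing x y with
  | zero => rfl
  | succ k ih => rw [Function.iterate_succ_apply', ih, map_add, Function.iterate_succ_apply',
      Function.iterate_succ_apply']

section CharP
variable [CharP R p]

theorem iterate_frobenius_teichmuller (a : R) (i : ℕ) :
    frobenius^[i] (teichmuller p a) = teichmuller p (a ^ p ^ i) := by
  apply WittVector.ext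
  intro n
  rw [iterate_frobenius_coeff]
  cases n with
  | zero => rw [teichmuller_coeff_zero, teichmuller_coeff_zero]
  | succ n =>
    rw [teichmuller_coeff_pos p a (n+1) (Nat.succ_pos n),
      teichmuller_coeff_pos p _ (n+1) (Nat.succ_pos n), zero_pow (pow_ne_zero _ hp.out.ne_zero)]

theorem vt_mul (a b : R) (i j : ℕ) :
    verschiebung^[i] (teichmuller p a) * verschiebung^[j] (teichmuller p b)
      = verschiebung^[i + j] (teichmuller p (a ^ p ^ j * b ^ p ^ i)) := by
  rw [iterate_verschiebung_mul, iterate_frobenius_teichmuller, iterate_frobenius_teichmuller,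
    ← map_mul]

theorem teichmuller_mul_coeff (a : R) (x : 𝕎) (n : ℕ) :
    (teichmuller p a * x).coeff n = a ^ p ^ n * x.coeff n := by
  have h1 : WittVector.truncate (n+1) (teichmuller p a * x)
      = WittVector.truncate (n+1) ((Finset.range (n+1)).sum
          (fun b => verschiebung^[b] (teichmuller p (a ^ p ^ b * x.coeff b)))) := by
    rw [map_mul, truncate_eq_sum x (n+1), ← map_mul, Finset.mul_sum]
    congr 1
    apply Finset.sum_congr rfl
    intro b _
    have h := vt_mul (p := p) (R := R) a (x.coeff b) 0 b
    simp only [Function.iterate_zero, id_eq, zero_add, pow_zero, pow_one] at h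
    exact h
  have h2 := congrArg (fun z => TruncatedWittVector.coeff ⟨n, Nat.lt_succ_self n⟩ z) h1
  simpa only [coeff_truncate, tsum_coeff, if_pos (Nat.lt_succ_self n)] using h2

theorem mem_span_teichmuller_iff (a : R) (f : 𝕎) :
    f ∈ Ideal.span {teichmuller p a} ↔ ∀ n, a ^ p ^ n ∣ f.coeff n := by
  rw [Ideal.mem_span_singleton]
  constructor
  · rintro ⟨h, rfl⟩ n
    exact ⟨h.coeff n, teichmuller_mul_coeff a h n⟩
  · intro H
    refine ⟨WittVector.mk p (fun n => (H n).choose), ?_⟩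
    apply WittVector.ext
    intro n
    rw [teichmuller_mul_coeff, WittVector.coeff_mk]
    exact (H n).choose_spec

end CharP

theorem vadd_coeff (c : R) (B : 𝕎) (n : ℕ) :
    (verschiebung^[n] (teichmuller p c) + B).coeff n = c + B.coeff n := by
  classical
  have hsel := select_add_select_not (fun i => i < n) B
  set s1 := select (fun i => i < n) B with hs1
  set t := select (fun i => ¬ i < n) B with ht
  have htlow : ∀ i < n, t.coeff i = 0 := by
    intro i hi
    rw [ht, select, WittVector.coeff_mk, if_neg (by omega)]
  have htV : t = verschiebung^[n] (t.shift n) := eq_iterate_verschiebung htlow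
  have key : verschiebung^[n] (teichmuller p c) + B
      = s1 + verschiebung^[n] (teichmuller p c + t.shift n) := by
    rw [iterate_verschiebung_add, ← htV, ← hsel]; ring
  rw [key, coeff_add_of_disjoint]
  · have h0 : s1.coeff n = 0 := by
      rw [hs1, select, WittVector.coeff_mk, if_neg (lt_irrefl n)]
    have h1 : (verschiebung^[n] (teichmuller p c + t.shift n)).coeff n = c + B.coeff n := by
      have := iterate_verschiebung_coeff (p := p) (R := R) (teichmuller p c + t.shift n) n 0
      rw [zero_add] at this
      rw [this, add_coeff_zero, teichmuller_coeff_zero, shift_coeff, Nat.add_zero]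
      congr 1
      rw [ht, select, WittVector.coeff_mk, if_pos (by omega)]
    rw [h0, h1, zero_add]
  · intro m
    rcases lt_or_ge m n with h | h
    · right; exact iterate_verschiebung_coeff_lt _ h
    · left; rw [hs1, select, WittVector.coeff_mk, if_neg (by omega)]

section ValHelp

variable {R : Type*} [CommRing R] [IsDomain R] [ValuationRing R] [Valued R NNReal]

theorem val_le_of_dvd (hint : ∀ x : R, Valued.v x ≤ 1) {x y : R} (h : y ∣ x) :
    Valued.v x ≤ Valued.v y := by
  obtain ⟨c, rfl⟩ := h
  rw [map_mul]
  exact mul_le_of_le_one_right' (hint c)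

theorem dvd_of_val_lt (hint : ∀ x : R, Valued.v x ≤ 1) {x y : R}
    (h : Valued.v x < Valued.v y) : y ∣ x := by
  obtain ⟨c, hc | hc⟩ := ValuationRing.cond y x
  · exact ⟨c, hc.symm⟩
  · exfalso
    have : Valued.v y ≤ Valued.v x := by
      rw [← hc, map_mul]
      exact mul_le_of_le_one_right' (hint c)
    exact absurd h (not_lt.2 this)

theorem val_le_of_not_dvd (hint : ∀ x : R, Valued.v x ≤ 1) {x a : R} (h : ¬ a ∣ x) :
    Valued.v a ≤ Valued.v x := by
  obtain ⟨c, hc | hc⟩ := ValuationRing.cond a x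
  · exact absurd ⟨c, hc.symm⟩ h
  · rw [← hc, map_mul]
    exact mul_le_of_le_one_right' (hint c)

theorem val_dense (hint : ∀ x : R, Valued.v x ≤ 1)
    (hnondisc : ∀ γ : NNReal, 0 < γ → γ < 1 → ∃ x : R, γ < Valued.v x ∧ Valued.v x < 1)
    {ϖ : R} (hϖ0 : 0 < Valued.v ϖ) (hϖ1 : Valued.v ϖ < 1)
    {β μ : NNReal} (hβμ : β < μ) (hμ1 : μ ≤ 1) :
    ∃ τ : R, β < Valued.v τ ∧ Valued.v τ < μ := by
  rcases eq_or_lt_of_le (zero_le : 0 ≤ β) with hβ0 | hβ0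
  · -- β = 0 : take a big power of ϖ
    obtain ⟨m, hm⟩ := NNReal.exists_pow_lt_of_lt_one (hβ0 ▸ hβμ : (0:NNReal) < μ) hϖ1
    refine ⟨ϖ ^ m, ?_, ?_⟩
    · rw [map_pow, ← hβ0]
      exact pow_pos hϖ0 m
    · rw [map_pow]; exact hm
  · -- β > 0
    have hμ0 : 0 < μ := lt_trans hβ0 hβμ
    set t : NNReal := β / μ with htdef
    have ht0 : 0 < t := by positivity
    have ht1 : t < 1 := by
      rw [htdef, div_lt_iff₀ hμ0, one_mul]
      exact hβμ
    obtain ⟨x, hx1, hx2⟩ := hnondisc t ht0 ht1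
    have hex : ∃ m, Valued.v x ^ m < μ := NNReal.exists_pow_lt_of_lt_one hμ0 hx2
    obtain ⟨m, hm, hmin⟩ : ∃ m, Valued.v x ^ m < μ ∧ ∀ l < m, ¬ (Valued.v x ^ l < μ) :=
      ⟨Nat.find hex, Nat.find_spec hex, fun l hl => Nat.find_min hex hl⟩
    have hmpos : m ≠ 0 := by
      intro h0
      rw [h0, pow_zero] at hm
      exact absurd hm (not_lt.2 hμ1)
    obtain ⟨m', rfl⟩ := Nat.exists_eq_succ_of_ne_zero hmpos
    have hm' : μ ≤ Valued.v x ^ m' := not_lt.1 (hmin m' (Nat.lt_succ_self m'))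
    refine ⟨x ^ (m' + 1), ?_, by rw [map_pow]; exact hm⟩
    rw [map_pow]
    calc β = μ * t := by rw [htdef, mul_div_cancel₀ _ hμ0.ne']
    _ < μ * Valued.v x := by exact mul_lt_mul_of_pos_left hx1 hμ0
    _ ≤ Valued.v x ^ m' * Valued.v x := mul_le_mul_left hm' _
    _ = Valued.v x ^ (m' + 1) := by rw [pow_succ]

end ValHelp
end Stmt6Aux
open Finset WittVector Stmt6Aux in
/-- Let `R` be a perfect valuation ring of characteristic `p`, complete with respect to a
nondiscrete rank-1 valuation, with pseudouniformizer `ϖ`.  In `𝔸 = W(R)`, the union over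
`k` of the principal ideals generated by the Teichmüller lifts of the `p^k`-th roots of `ϖ`
is a prime ideal. -/
theorem stmt6 (p : ℕ) [Fact p.Prime] (R : Type*) [CommRing R] [IsDomain R]
    [CharP R p] [PerfectRing R p] [ValuationRing R]
    [Valued R NNReal] [CompleteSpace R]
    (hint : ∀ x : R, Valued.v x ≤ 1)
    (hnondisc : ∀ γ : NNReal, 0 < γ → γ < 1 → ∃ x : R, γ < Valued.v x ∧ Valued.v x < 1)
    (ϖ : R) (hϖ0 : 0 < Valued.v ϖ) (hϖ1 : Valued.v ϖ < 1) :
    ∃ P : Ideal (WittVector p R), P.IsPrime ∧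
      (P : Set (WittVector p R)) =
        ⋃ k : ℕ, (Ideal.span {WittVector.teichmuller p
          ((fun x => (frobeniusEquiv R p).symm x)^[k] ϖ)} : Set (WittVector p R)) := by
  classical
  have hp : Fact p.Prime := inferInstance
  set π : ℕ → R := fun k => (fun x => (frobeniusEquiv R p).symm x)^[k] ϖ with hπdef
  set Pk : ℕ → Ideal (WittVector p R) :=
    fun k => Ideal.span {WittVector.teichmuller p (π k)} with hPkdef
  -- basic facts about the roots of ϖ
  have hπsucc : ∀ k, π (k + 1) ^ p = π k := by
    intro k
    have h1 : π (k + 1) = (frobeniusEquiv R p).symm (π k) := by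
      simp only [hπdef, Function.iterate_succ_apply']
    rw [h1, frobeniusEquiv_symm_pow_p]
  have hπv : ∀ k, Valued.v (π k) ^ p ^ k = Valued.v ϖ := by
    intro k
    induction k with
    | zero => simp [hπdef]
    | succ k ih =>
      rw [pow_succ', pow_mul, ← map_pow, hπsucc k, ih]
  have hπ0 : ∀ k, 0 < Valued.v (π k) := by
    intro k
    rcases eq_or_lt_of_le (zero_le : 0 ≤ Valued.v (π k)) with h | h
    · exfalso
      have := hπv k
      rw [← h, zero_pow (pow_ne_zero k hp.out.ne_zero)] at this
      exact absurd this.symm hϖ0.ne'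
    · exact h
  have hπ1 : ∀ k, Valued.v (π k) < 1 := by
    intro k
    rcases lt_or_eq_of_le (hint (π k)) with h | h
    · exact h
    · exfalso
      have := hπv k
      rw [h, one_pow] at this
      exact absurd this.symm hϖ1.ne
  have hchain : Monotone Pk := by
    apply monotone_nat_of_le_succ
    intro k
    rw [hPkdef]
    apply Ideal.span_singleton_le_span_singleton.2
    rw [← hπsucc k, map_pow]
    exact dvd_pow_self _ hp.out.ne_zero
  have hmem : ∀ (f : WittVector p R) (k), f ∈ Pk k ↔ ∀ n, π k ^ p ^ n ∣ f.coeff n :=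
    fun f k => mem_span_teichmuller_iff (π k) f
  have hmemP : ∀ f, f ∈ iSup Pk ↔ ∃ k, f ∈ Pk k :=
    fun f => Submodule.mem_iSup_of_directed Pk hchain.directed_le
  -- the normalized coefficient valuations
  have hppos : (0:ℝ) < (p:ℝ) := by exact_mod_cast hp.out.pos
  set tc : WittVector p R → ℕ → NNReal :=
    fun x a => Valued.v (x.coeff a) ^ (((p:ℝ) ^ a)⁻¹) with htcdef
  have tc_pow : ∀ (x : WittVector p R) (a : ℕ), tc x a ^ p ^ a = Valued.v (x.coeff a) := by
    intro x a
    rw [htcdef]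
    dsimp only
    rw [← NNReal.rpow_natCast (Valued.v (x.coeff a) ^ (((p:ℝ) ^ a)⁻¹)) (p ^ a),
      ← NNReal.rpow_mul]
    rw [show (((p:ℝ) ^ a)⁻¹ * ((p ^ a : ℕ) : ℝ)) = 1 by
      push_cast
      field_simp]
    exact NNReal.rpow_one _
  have tc_le_one : ∀ (x : WittVector p R) (a : ℕ), tc x a ≤ 1 := by
    intro x a
    exact NNReal.rpow_le_one (hint _) (by positivity)
  have hvu : ∀ (x y : WittVector p R) (a b : ℕ),
      Valued.v (x.coeff a ^ p ^ b * y.coeff b ^ p ^ a) = (tc x a * tc y b) ^ p ^ (a + b) := by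
    intro x y a b
    have e1 : (tc x a) ^ p ^ (a + b) = Valued.v (x.coeff a) ^ p ^ b := by
      rw [pow_add, pow_mul, tc_pow]
    have e2 : (tc y b) ^ p ^ (a + b) = Valued.v (y.coeff b) ^ p ^ a := by
      rw [add_comm a b, pow_add, pow_mul, tc_pow]
    rw [map_mul, map_pow, map_pow, mul_pow, e1, e2]
  refine ⟨iSup Pk, ⟨?_, ?_⟩, ?_⟩
  · -- not the unit ideal
    intro htop
    have h1 : (1 : WittVector p R) ∈ iSup Pk := htop ▸ Submodule.mem_top
    obtain ⟨k, hk⟩ := (hmemP 1).1 h1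
    have h2 := ((hmem 1 k).1 hk) 0
    rw [pow_zero, pow_one, one_coeff_zero] at h2
    have h3 := val_le_of_dvd hint h2
    rw [map_one] at h3
    exact absurd (lt_of_le_of_lt h3 (hπ1 k)) (lt_irrefl 1)
  · -- primality
    intro f g hfg
    by_contra hcon
    push_neg at hcon
    obtain ⟨hf, hg⟩ := hcon
    obtain ⟨K, hK⟩ := (hmemP _).1 hfg
    replace hK := (hmem _ K).1 hK
    set δ : NNReal := Valued.v (π K) with hδdef
    have hδ0 : 0 < δ := hπ0 K
    have hδ1 : δ < 1 := hπ1 K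
    -- choose k with δ < η ^ 3
    obtain ⟨k, hη3⟩ : ∃ k, δ < Valued.v (π k) ^ 3 := by
      obtain ⟨m, hm⟩ := NNReal.exists_pow_lt_of_lt_one
        (show (0:NNReal) < Valued.v ϖ ^ 3 by positivity) hδ1
      refine ⟨m, ?_⟩
      have h1 : δ ^ p ^ m ≤ δ ^ m :=
        pow_le_pow_right_of_le_one' hδ1.le (Nat.lt_pow_self hp.out.one_lt).le
      have h2 : δ ^ p ^ m < (Valued.v (π m) ^ 3) ^ p ^ m := by
        rw [← pow_mul, mul_comm 3 (p ^ m), pow_mul, hπv m]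
        exact lt_of_le_of_lt h1 hm
      exact lt_of_pow_lt_pow_left₀ _ zero_le h2
    set η : NNReal := Valued.v (π k) with hηdef
    have hη0 : 0 < η := hπ0 k
    have hη1 : η < 1 := hπ1 k
    -- indices where f, g have large coefficients
    have hfnot : f ∉ Pk k := fun hk' => hf ((hmemP f).2 ⟨k, hk'⟩)
    have hgnot : g ∉ Pk k := fun hk' => hg ((hmemP g).2 ⟨k, hk'⟩)
    obtain ⟨a₀, ha₀⟩ : ∃ a, η ≤ tc f a := by
      obtain ⟨a, ha⟩ := not_forall.1 (fun hall => hfnot ((hmem f k).2 hall))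
      refine ⟨a, ?_⟩
      have h1 := val_le_of_not_dvd hint ha
      rw [map_pow] at h1
      have h2 : η ^ p ^ a ≤ tc f a ^ p ^ a := by rw [tc_pow]; exact h1
      exact le_of_pow_le_pow_left₀ (pow_ne_zero a hp.out.ne_zero) zero_le h2
    obtain ⟨b₀, hb₀⟩ : ∃ b, η ≤ tc g b := by
      obtain ⟨b, hb⟩ := not_forall.1 (fun hall => hgnot ((hmem g k).2 hall))
      refine ⟨b, ?_⟩
      have h1 := val_le_of_not_dvd hint hb
      rw [map_pow] at h1
      have h2 : η ^ p ^ b ≤ tc g b ^ p ^ b := by rw [tc_pow]; exact h1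
      exact le_of_pow_le_pow_left₀ (pow_ne_zero b hp.out.ne_zero) zero_le h2
    -- the radius ρ
    have hη2 : δ < η ^ 2 :=
      lt_of_lt_of_le hη3 (pow_le_pow_right_of_le_one' hη1.le (by norm_num))
    set s : NNReal := δ / η ^ 2 with hsdef
    have hs0 : 0 < s := by
      rw [hsdef]
      exact div_pos hδ0 (by positivity)
    have hs1 : s < 1 := by
      rw [hsdef, div_lt_iff₀ (by positivity : (0:NNReal) < η ^ 2), one_mul]
      exact hη2
    set m₀ : ℕ := a₀ + b₀ with hm₀def
    set ρ : NNReal := s ^ (((2 * ((m₀:ℝ) + 1)))⁻¹ : ℝ) with hρdef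
    have hρ0 : 0 < ρ := NNReal.rpow_pos hs0
    have hρ1 : ρ < 1 := NNReal.rpow_lt_one hs1 (by positivity)
    have hρm : s < ρ ^ m₀ := by
      rw [hρdef, ← NNReal.rpow_natCast (s ^ (((2 * ((m₀:ℝ) + 1)))⁻¹ : ℝ)) m₀,
        ← NNReal.rpow_mul]
      nth_rewrite 1 [show s = s ^ (1:ℝ) from (NNReal.rpow_one s).symm]
      apply NNReal.rpow_lt_rpow_of_exponent_gt hs0 hs1
      rw [inv_mul_eq_div, div_lt_one (by positivity)]
      push_cast
      linarith
    -- least maximizing indices for the ρ-Gauss norm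
    have choose_max : ∀ (x : WittVector p R) (c : ℕ), η ≤ tc x c →
        ∃ i, (∀ a, tc x a * ρ ^ a ≤ tc x i * ρ ^ i) ∧
             (∀ a, a < i → tc x a * ρ ^ a < tc x i * ρ ^ i) := by
      intro x c hc
      have hφc : η * ρ ^ c ≤ tc x c * ρ ^ c := mul_le_mul_left hc _
      have hpos : (0:NNReal) < η * ρ ^ c := by positivity
      obtain ⟨A, hA⟩ : ∃ A, ρ ^ A < η * ρ ^ c :=
        NNReal.exists_pow_lt_of_lt_one hpos hρ1
      obtain ⟨i₁, hi₁R, hi₁max⟩ := Finset.exists_max_image (Finset.range (A + c + 1))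
        (fun a => tc x a * ρ ^ a) ⟨c, Finset.mem_range.2 (by omega)⟩
      have hglob : ∀ a, tc x a * ρ ^ a ≤ tc x i₁ * ρ ^ i₁ := by
        intro a
        by_cases hmem' : a ∈ Finset.range (A + c + 1)
        · exact hi₁max a hmem'
        · have haA : A ≤ a := by
            simp only [Finset.mem_range] at hmem'
            omega
          refine le_of_lt ?_
          calc tc x a * ρ ^ a ≤ 1 * ρ ^ a := mul_le_mul_left (tc_le_one x a) _
            _ = ρ ^ a := one_mul _
            _ ≤ ρ ^ A := pow_le_pow_right_of_le_one' hρ1.le haA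
            _ < η * ρ ^ c := hA
            _ ≤ tc x c * ρ ^ c := hφc
            _ ≤ tc x i₁ * ρ ^ i₁ := hi₁max c (Finset.mem_range.2 (by omega))
      have hQex : ∃ i, ∀ a, tc x a * ρ ^ a ≤ tc x i * ρ ^ i := ⟨i₁, hglob⟩
      refine ⟨Nat.find hQex, Nat.find_spec hQex, ?_⟩
      intro a ha
      have hna := Nat.find_min hQex ha
      push_neg at hna
      obtain ⟨b, hb⟩ := hna
      exact lt_of_lt_of_le hb (Nat.find_spec hQex b)
    obtain ⟨i, hiφ, hileast⟩ := choose_max f a₀ ha₀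
    obtain ⟨j, hjφ, hjleast⟩ := choose_max g b₀ hb₀
    set n : ℕ := i + j with hndef
    -- positivity and lower bounds
    have hfi : η * ρ ^ a₀ ≤ tc f i :=
      calc η * ρ ^ a₀ ≤ tc f a₀ * ρ ^ a₀ := mul_le_mul_left ha₀ _
        _ ≤ tc f i * ρ ^ i := hiφ a₀
        _ ≤ tc f i * 1 := mul_le_mul_right (pow_le_one₀ zero_le hρ1.le) _
        _ = tc f i := mul_one _
    have hgj : η * ρ ^ b₀ ≤ tc g j :=
      calc η * ρ ^ b₀ ≤ tc g b₀ * ρ ^ b₀ := mul_le_mul_left hb₀ _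
        _ ≤ tc g j * ρ ^ j := hjφ b₀
        _ ≤ tc g j * 1 := mul_le_mul_right (pow_le_one₀ zero_le hρ1.le) _
        _ = tc g j := mul_one _
    have htcfi0 : 0 < tc f i := lt_of_lt_of_le (by positivity) hfi
    have htcgj0 : 0 < tc g j := lt_of_lt_of_le (by positivity) hgj
    set μ : NNReal := tc f i * tc g j with hμdef
    have hμ0 : 0 < μ := by positivity
    have hμ1 : μ ≤ 1 := by
      calc μ ≤ 1 * 1 := mul_le_mul' (tc_le_one f i) (tc_le_one g j)
        _ = 1 := one_mul 1
    have hφipos : 0 < tc f i * ρ ^ i := by positivity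
    have hψjpos : 0 < tc g j * ρ ^ j := by positivity
    -- strict domination of all non-main terms
    have hstrict : ∀ a b : ℕ, a + b ≤ n → (a, b) ≠ (i, j) → tc f a * tc g b < μ := by
      intro a b hab hne
      have hprod : ∀ (a b : ℕ), (tc f a * ρ ^ a) * (tc g b * ρ ^ b)
          = (tc f a * tc g b) * ρ ^ (a + b) := by
        intro a b
        rw [pow_add]; ring
      rcases eq_or_lt_of_le hab with heq | hlt
      · -- a + b = n
        have hane : a ≠ i := by
          intro h
          apply hne
          have : b = j := by omega
          rw [h, this]
        rcases lt_or_gt_of_ne hane with h | h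
        · have h1 : (tc f a * ρ ^ a) * (tc g b * ρ ^ b) < (tc f i * ρ ^ i) * (tc g j * ρ ^ j) :=
            lt_of_le_of_lt (mul_le_mul_right (hjφ b) _)
              (mul_lt_mul_of_pos_right (hileast a h) hψjpos)
          rw [hprod, hprod, heq] at h1
          exact lt_of_mul_lt_mul_right h1 zero_le
        · have hbj : b < j := by omega
          have h1 : (tc f a * ρ ^ a) * (tc g b * ρ ^ b) < (tc f i * ρ ^ i) * (tc g j * ρ ^ j) :=
            lt_of_le_of_lt (mul_le_mul_left (hiφ a) _)
              (mul_lt_mul_of_pos_left (hjleast b hbj) hφipos)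
          rw [hprod, hprod, heq] at h1
          exact lt_of_mul_lt_mul_right h1 zero_le
      · -- a + b < n
        have h1 : (tc f a * tc g b) * ρ ^ (a + b) ≤ μ * ρ ^ n := by
          rw [← hprod a b, hμdef, ← hprod i j]
          exact mul_le_mul' (hiφ a) (hjφ b)
        have h2 : μ * ρ ^ n = (μ * ρ ^ (n - (a + b))) * ρ ^ (a + b) := by
          rw [mul_assoc μ _ _, ← pow_add ρ (n - (a + b)) (a + b)]
          congr 2
          omega
        rw [h2] at h1
        have h3 : tc f a * tc g b ≤ μ * ρ ^ (n - (a + b)) :=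
          le_of_mul_le_mul_right h1 (by positivity)
        have h4 : μ * ρ ^ (n - (a + b)) < μ * 1 :=
          mul_lt_mul_of_pos_left
            (pow_lt_one₀ zero_le hρ1 (by omega)) hμ0
        rw [mul_one] at h4
        exact lt_of_le_of_lt h3 h4
    -- the auxiliary element τ
    set T : Finset (ℕ × ℕ) := Finset.range (n + 1) ×ˢ Finset.range (n + 1) with hTdef
    set Tlow : Finset (ℕ × ℕ) := T.filter (fun ab => ab.1 + ab.2 ≤ n) with hTlowdef
    set srest : Finset (ℕ × ℕ) := Tlow.erase (i, j) with hsrestdef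
    set β : NNReal := srest.sup (fun ab => tc f ab.1 * tc g ab.2) with hβdef
    have hβμ : β < μ := by
      rw [hβdef]
      rw [Finset.sup_lt_iff hμ0]
      intro ab hab
      rw [hsrestdef] at hab
      have hne := Finset.ne_of_mem_erase hab
      have hab' := Finset.mem_of_mem_erase hab
      rw [hTlowdef, Finset.mem_filter] at hab'
      exact hstrict ab.1 ab.2 hab'.2 (by
        intro h
        apply hne
        rw [← h])
    obtain ⟨τ, hτβ, hτμ⟩ := val_dense hint hnondisc hϖ0 hϖ1 hβμ hμ1
    -- the coefficient computation
    set u : ℕ → ℕ → R := fun a b => f.coeff a ^ p ^ b * g.coeff b ^ p ^ a with hudef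
    set S : WittVector p R :=
      ∑ ab ∈ T, verschiebung^[ab.1 + ab.2] (teichmuller p (u ab.1 ab.2)) with hSdef
    have h1 : WittVector.truncate (n + 1) (f * g) = WittVector.truncate (n + 1) S := by
      rw [map_mul, truncate_eq_sum f (n+1), truncate_eq_sum g (n+1), ← map_mul]
      congr 1
      rw [Finset.sum_mul_sum, hSdef, hTdef, Finset.sum_product]
      apply Finset.sum_congr rfl
      intro a _
      apply Finset.sum_congr rfl
      intro b _
      exact vt_mul (f.coeff a) (g.coeff b) a b
    have hsplit : S = (∑ ab ∈ Tlow, verschiebung^[ab.1 + ab.2] (teichmuller p (u ab.1 ab.2)))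
        + ∑ ab ∈ T.filter (fun ab => ¬ ab.1 + ab.2 ≤ n),
            verschiebung^[ab.1 + ab.2] (teichmuller p (u ab.1 ab.2)) := by
      rw [hSdef, hTlowdef]
      exact (Finset.sum_filter_add_sum_filter_not T _ _).symm
    have hbig : WittVector.truncate (n + 1)
        (∑ ab ∈ T.filter (fun ab => ¬ ab.1 + ab.2 ≤ n),
          verschiebung^[ab.1 + ab.2] (teichmuller p (u ab.1 ab.2))) = 0 := by
      rw [map_sum]
      apply Finset.sum_eq_zero
      intro ab hab
      rw [Finset.mem_filter] at hab
      apply TruncatedWittVector.ext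
      intro s'
      rw [coeff_truncate, vt_coeff, TruncatedWittVector.coeff_zero]
      rw [if_neg]
      have := s'.2
      omega
    have h2 : WittVector.truncate (n + 1) (f * g) = WittVector.truncate (n + 1)
        (∑ ab ∈ Tlow, verschiebung^[ab.1 + ab.2] (teichmuller p (u ab.1 ab.2))) := by
      rw [h1, hsplit, map_add, hbig, add_zero]
    have hijmem : (i, j) ∈ Tlow := by
      rw [hTlowdef, Finset.mem_filter, hTdef, Finset.mem_product]
      refine ⟨⟨Finset.mem_range.2 (by omega), Finset.mem_range.2 (by omega)⟩, le_of_eq rfl⟩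
    set Q : WittVector p R :=
      ∑ ab ∈ srest, verschiebung^[ab.1 + ab.2] (teichmuller p (u ab.1 ab.2)) with hQdef
    have hsg : (∑ ab ∈ Tlow, verschiebung^[ab.1 + ab.2] (teichmuller p (u ab.1 ab.2)))
        = verschiebung^[n] (teichmuller p (u i j)) + Q := by
      rw [hQdef, hsrestdef]
      exact (Finset.add_sum_erase Tlow _ hijmem).symm
    have hcoeff : (f * g).coeff n = u i j + Q.coeff n := by
      have h3 := congrArg (fun z => TruncatedWittVector.coeff ⟨n, Nat.lt_succ_self n⟩ z) h2
      simp only [coeff_truncate] at h3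
      rw [h3, hsg, vadd_coeff]
    -- Q is highly divisible
    have hQmem : Q ∈ Ideal.span {teichmuller p τ} := by
      rw [hQdef]
      apply Ideal.sum_mem
      intro ab hab
      rw [mem_span_teichmuller_iff]
      intro s'
      rw [vt_coeff]
      split_ifs with hcase
      · apply dvd_of_val_lt hint
        rw [map_pow]
        simp only [hudef]
        have hle : tc f ab.1 * tc g ab.2 ≤ β := by
          rw [hβdef]
          exact Finset.le_sup (f := fun ab => tc f ab.1 * tc g ab.2) hab
        calc Valued.v (f.coeff ab.1 ^ p ^ ab.2 * g.coeff ab.2 ^ p ^ ab.1)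
            = (tc f ab.1 * tc g ab.2) ^ p ^ (ab.1 + ab.2) := hvu f g ab.1 ab.2
          _ ≤ β ^ p ^ (ab.1 + ab.2) := pow_le_pow_left₀ zero_le hle _
          _ < Valued.v τ ^ p ^ (ab.1 + ab.2) :=
              pow_lt_pow_left₀ hτβ zero_le (pow_ne_zero _ hp.out.ne_zero)
          _ = Valued.v τ ^ p ^ s' := by rw [hcase]
      · exact dvd_zero _
    have hQn : Valued.v (Q.coeff n) < Valued.v (u i j) := by
      have h4 := ((mem_span_teichmuller_iff τ Q).1 hQmem) n
      have h5 := val_le_of_dvd hint h4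
      rw [map_pow] at h5
      calc Valued.v (Q.coeff n) ≤ Valued.v τ ^ p ^ n := h5
        _ < μ ^ p ^ n := pow_lt_pow_left₀ hτμ zero_le (pow_ne_zero _ hp.out.ne_zero)
        _ = Valued.v (u i j) := by simp only [hudef]; rw [hvu f g i j, hμdef, hndef]
    -- conclusion
    have hz : Valued.v ((f * g).coeff n) = μ ^ p ^ n := by
      rw [hcoeff, Valuation.map_add_eq_of_lt_left _ hQn]
      simp only [hudef]
      rw [hvu f g i j, hμdef, hndef]
    have hδz : Valued.v ((f * g).coeff n) ≤ δ ^ p ^ n := by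
      have h6 := val_le_of_dvd hint (hK n)
      rw [map_pow] at h6
      exact h6
    have hμδ : μ ≤ δ := by
      rw [hz] at hδz
      exact le_of_pow_le_pow_left₀ (pow_ne_zero _ hp.out.ne_zero) zero_le hδz
    have hδμ : δ < μ := by
      calc δ = η ^ 2 * s := by
            rw [hsdef, mul_comm, div_mul_cancel₀ _ (by positivity : (η:NNReal) ^ 2 ≠ 0)]
        _ < η ^ 2 * ρ ^ m₀ := mul_lt_mul_of_pos_left hρm (by positivity)
        _ = (η * ρ ^ a₀) * (η * ρ ^ b₀) := by rw [hm₀def, pow_add]; ring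
        _ ≤ tc f i * tc g j := mul_le_mul' hfi hgj
        _ = μ := hμdef.symm
    exact absurd (lt_of_le_of_lt hμδ hδμ) (lt_irrefl _)
  · -- the underlying set is the union
    rw [Submodule.coe_iSup_of_directed Pk hchain.directed_le]
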